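/- If a finitely generated group G contains a free submonoid on 2 generators, then G has exponential word growth: for any finite generating set S, the limit of the n-th roots of the sizes of balls of radius n is strictly greater than 1. -/

import Mathlib

open Filter Set Pointwise

/-- The ball of radius `n` in a group with respect to a generating set `S`:
elements expressible as products of at most `n` generators or inverses of generators. -/
def wordBall {G : Type*} [Group G] (S : Set G) (n : ℕ) : Set G :=
  {g | ∃ l : List G, (∀ x ∈ l, x ∈ S ∨ x⁻¹ ∈ S) ∧ l.length ≤ n ∧ l.prod = g}

section aux

variable {G : Type*} [Group G] {S : Set G}

lemma wordBall_one_mem (n : ℕ) : (1 : G) ∈ wordBall S n :=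
  ⟨[], by simp, by simp, by simp⟩

lemma wordBall_mono {m n : ℕ} (h : m ≤ n) : wordBall S m ⊆ wordBall S n := by
  rintro g ⟨l, h1, h2, h3⟩
  exact ⟨l, h1, h2.trans h, h3⟩

lemma wordBall_mul_mem {m n : ℕ} {g h : G} (hg : g ∈ wordBall S m) (hh : h ∈ wordBall S n) :
    g * h ∈ wordBall S (m + n) := by
  obtain ⟨l1, ha1, ha2, ha3⟩ := hg
  obtain ⟨l2, hb1, hb2, hb3⟩ := hh
  refine ⟨l1 ++ l2, ?_, ?_, ?_⟩
  · intro x hx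
    rcases List.mem_append.1 hx with hx | hx
    · exact ha1 x hx
    · exact hb1 x hx
  · simp only [List.length_append]; omega
  · simp [ha3, hb3]

lemma wordBall_subset_mul (m n : ℕ) : wordBall S (m + n) ⊆ wordBall S m * wordBall S n := by
  rintro g ⟨l, h1, h2, h3⟩
  refine ⟨(l.take m).prod, ⟨l.take m, fun x hx => h1 x (List.mem_of_mem_take hx),
      by simpa using Nat.min_le_left _ _, rfl⟩,
    (l.drop m).prod, ⟨l.drop m, fun x hx => h1 x (List.mem_of_mem_drop hx),
      by simp; omega, rfl⟩, ?_⟩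
  show (l.take m).prod * (l.drop m).prod = g
  rw [← List.prod_append, List.take_append_drop, h3]

lemma wordBall_finite (hS : S.Finite) (n : ℕ) : (wordBall S n).Finite := by
  induction n with
  | zero =>
    refine Set.Finite.subset (Set.finite_singleton (1 : G)) ?_
    rintro g ⟨l, _, h2, h3⟩
    simp only [Nat.le_zero, List.length_eq_zero_iff] at h2
    subst h2
    simp at h3
    simp [← h3]
  | succ n ih =>
    refine Set.Finite.subset (ih.union (((hS.union hS.inv).mul ih))) ?_
    rintro g ⟨l, h1, h2, h3⟩
    match l with
    | [] => exact Or.inl (h3 ▸ wordBall_one_mem n)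
    | x :: t =>
      right
      refine ⟨x, ?_, t.prod, ⟨t, fun y hy => h1 y (List.mem_cons_of_mem _ hy),
        by simpa using h2, rfl⟩, by simp [← h3]⟩
      rcases h1 x List.mem_cons_self with hx | hx
      · exact Or.inl hx
      · exact Or.inr (Set.mem_inv.2 hx)

lemma wordBall_card_pos (hS : S.Finite) (n : ℕ) : 0 < Nat.card (wordBall S n) := by
  rw [Nat.card_pos_iff]
  exact ⟨⟨⟨1, wordBall_one_mem n⟩⟩, (wordBall_finite hS n).to_subtype⟩

lemma wordBall_card_add_le (hS : S.Finite) (m n : ℕ) :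
    Nat.card (wordBall S (m + n)) ≤ Nat.card (wordBall S m) * Nat.card (wordBall S n) := by
  calc Nat.card (wordBall S (m + n)) ≤ Nat.card (wordBall S m * wordBall S n) := by
        refine Nat.card_mono ?_ (wordBall_subset_mul m n)
        exact ((wordBall_finite hS m).mul (wordBall_finite hS n)).to_subtype
    _ ≤ _ := Set.natCard_mul_le

lemma wordBall_card_mul_le (hS : S.Finite) (m k : ℕ) :
    Nat.card (wordBall S (m * k)) ≤ Nat.card (wordBall S k) ^ m := by
  induction m with
  | zero =>
    have : wordBall S 0 ⊆ {(1 : G)} := by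
      rintro g ⟨l, _, h2, h3⟩
      simp only [Nat.le_zero, List.length_eq_zero_iff] at h2
      subst h2
      simp at h3
      simp [← h3]
    simpa using Nat.card_mono (Set.finite_singleton _).to_subtype this
  | succ m ih =>
    calc Nat.card (wordBall S ((m + 1) * k)) = Nat.card (wordBall S (m * k + k)) := by ring_nf
      _ ≤ Nat.card (wordBall S (m * k)) * Nat.card (wordBall S k) := wordBall_card_add_le hS _ _
      _ ≤ Nat.card (wordBall S k) ^ m * Nat.card (wordBall S k) := by
          exact Nat.mul_le_mul_right _ ih
      _ = Nat.card (wordBall S k) ^ (m + 1) := by ring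

end aux

/-- If a finitely generated group contains a free submonoid on two generators, then it has
exponential word growth with respect to every finite generating set. -/
theorem exponential_growth_of_free_submonoid {G : Type*} [Group G]
    (hfree : ∃ f : FreeMonoid (Fin 2) →* G, Function.Injective f)
    (S : Set G) (hSfin : S.Finite) (hSgen : Subgroup.closure S = ⊤) :
    ∃ L : ℝ, 1 < L ∧
      Filter.Tendsto (fun n : ℕ => (Nat.card (wordBall S n) : ℝ) ^ (1 / (n : ℝ)))
        Filter.atTop (nhds L) := by
  obtain ⟨f, hf⟩ := hfree
  -- every element lies in some ball
  have hmem : ∀ g : G, ∃ k : ℕ, g ∈ wordBall S k := by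
    intro g
    have hg : g ∈ Submonoid.closure (S ∪ S⁻¹) := by
      rw [← Subgroup.closure_toSubmonoid]
      exact (hSgen ▸ Subgroup.mem_top g : g ∈ Subgroup.closure S)
    obtain ⟨l, h1, h2⟩ := Submonoid.exists_list_of_mem_closure hg
    exact ⟨l.length, l, fun x hx => by
      rcases h1 x hx with h | h
      · exact Or.inl h
      · exact Or.inr (Set.mem_inv.1 h), le_refl _, h2⟩
  obtain ⟨ka, hka⟩ := hmem (f (FreeMonoid.of 0))
  obtain ⟨kb, hkb⟩ := hmem (f (FreeMonoid.of 1))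
  set C : ℕ := max (max ka kb) 1 with hC
  have hC1 : 1 ≤ C := le_max_right _ _
  have hgen : ∀ i : Fin 2, f (FreeMonoid.of i) ∈ wordBall S C := by
    intro i
    fin_cases i
    · exact wordBall_mono (le_trans (le_max_left _ _) (le_max_left _ _)) hka
    · exact wordBall_mono (le_trans (le_max_right _ _) (le_max_left _ _)) hkb
  -- words map into balls
  have hword : ∀ w : List (Fin 2), f (FreeMonoid.ofList w) ∈ wordBall S (C * w.length) := by
    intro w
    induction w with
    | nil => simpa using wordBall_one_mem 0
    | cons x t ih =>
      have : FreeMonoid.ofList (x :: t) = FreeMonoid.of x * FreeMonoid.ofList t := rfl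
      rw [this, map_mul]
      have := wordBall_mul_mem (hgen x) ih
      convert this using 2
      simp [List.length_cons]; ring
  -- lower bound on cards
  have hlow : ∀ n : ℕ, 2 ^ n ≤ Nat.card (wordBall S (C * n)) := by
    intro n
    have hfin := (wordBall_finite hSfin (C*n)).to_subtype
    have hinj : Function.Injective
        (fun v : Fin n → Fin 2 => (⟨f (FreeMonoid.ofList (List.ofFn v)), by
          simpa using hword (List.ofFn v)⟩ : wordBall S (C * n))) := by
      intro v w hvw
      simp only [Subtype.mk.injEq] at hvw
      have := hf hvw
      have h2 : List.ofFn v = List.ofFn w := congrArg FreeMonoid.toList this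
      exact (List.ofFn_inj.1 h2)
    have := Nat.card_le_card_of_injective _ hinj
    simpa [Nat.card_fun, Nat.card_eq_fintype_card] using this
  -- set up the subadditive sequence
  set u : ℕ → ℝ := fun n => Real.log (Nat.card (wordBall S n)) with hu
  have hcard1 : ∀ n, (1 : ℝ) ≤ (Nat.card (wordBall S n) : ℝ) := by
    intro n; exact_mod_cast wordBall_card_pos hSfin n
  have hu0 : ∀ n, 0 ≤ u n := fun n => Real.log_nonneg (hcard1 n)
  have hsub : Subadditive u := by
    intro m n
    have h1 : (Nat.card (wordBall S (m + n)) : ℝ) ≤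
        (Nat.card (wordBall S m) : ℝ) * (Nat.card (wordBall S n) : ℝ) := by
      exact_mod_cast wordBall_card_add_le hSfin m n
    calc u (m + n) ≤ Real.log ((Nat.card (wordBall S m) : ℝ) * (Nat.card (wordBall S n) : ℝ)) :=
          Real.log_le_log (lt_of_lt_of_le one_pos (hcard1 _)) h1
      _ = u m + u n := Real.log_mul (ne_of_gt (lt_of_lt_of_le one_pos (hcard1 _))) (ne_of_gt (lt_of_lt_of_le one_pos (hcard1 _)))
  have hbdd : BddBelow (Set.range fun n : ℕ => u n / n) := by
    refine ⟨0, ?_⟩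
    rintro x ⟨n, rfl⟩
    positivity
  -- key lower bound for u n / n
  have hkey : ∀ n : ℕ, 1 ≤ n → Real.log 2 / C ≤ u n / n := by
    intro n hn
    have h1 : (n : ℝ) * Real.log 2 ≤ u (C * n) := by
      have : (2 : ℝ) ^ n ≤ (Nat.card (wordBall S (C * n)) : ℝ) := by
        exact_mod_cast hlow n
      calc (n : ℝ) * Real.log 2 = Real.log ((2 : ℝ) ^ n) := (by rw [Real.log_pow])
        _ ≤ u (C * n) := Real.log_le_log (by positivity) this
    have h2 : u (C * n) ≤ (C : ℝ) * u n := by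
      have h3 : (Nat.card (wordBall S (C * n)) : ℝ) ≤ (Nat.card (wordBall S n) : ℝ) ^ C := by
        exact_mod_cast wordBall_card_mul_le hSfin C n
      calc u (C * n) ≤ Real.log ((Nat.card (wordBall S n) : ℝ) ^ C) :=
            Real.log_le_log (lt_of_lt_of_le one_pos (hcard1 _)) h3
        _ = (C : ℝ) * u n := by rw [Real.log_pow]
    have hCpos : (0 : ℝ) < C := by exact_mod_cast hC1
    have hnpos : (0 : ℝ) < n := by exact_mod_cast hn
    rw [div_le_div_iff₀ hCpos hnpos]
    have : (n : ℝ) * Real.log 2 ≤ (C : ℝ) * u n := h1.trans h2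
    nlinarith [this]
  have hlim_lb : Real.log 2 / C ≤ hsub.lim := by
    rw [Subadditive.lim]
    refine le_csInf ⟨u 1 / 1, ⟨1, by simp, by norm_num⟩⟩ ?_
    rintro x ⟨n, hn, rfl⟩
    exact hkey n hn
  have hlimpos : 0 < hsub.lim := by
    refine lt_of_lt_of_le ?_ hlim_lb
    have : (0 : ℝ) < Real.log 2 := Real.log_pos (by norm_num)
    have hCpos : (0 : ℝ) < C := by exact_mod_cast hC1
    positivity
  refine ⟨Real.exp hsub.lim, ?_, ?_⟩
  · calc (1 : ℝ) = Real.exp 0 := by simp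
      _ < Real.exp hsub.lim := Real.exp_lt_exp.2 hlimpos
  · have h1 : Tendsto (fun n : ℕ => u n / n) atTop (nhds hsub.lim) := hsub.tendsto_lim hbdd
    have h2 : Tendsto (fun n : ℕ => Real.exp (u n / n)) atTop (nhds (Real.exp hsub.lim)) :=
      (Real.continuous_exp.tendsto _).comp h1
    refine h2.congr' ?_
    filter_upwards [eventually_ge_atTop 1] with n hn
    have hpos : (0 : ℝ) < (Nat.card (wordBall S n) : ℝ) := lt_of_lt_of_le one_pos (hcard1 n)
    rw [Real.rpow_def_of_pos hpos]
    congr 1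
    rw [hu]
    field_simp
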